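/- Let X be a metric space, let μ₀ be a Borel probability measure on X, and suppose μ₀ has an Onsager–Machlup functional on a nonempty subset E ⊆ supp(μ₀) and that property M(μ₀, E) holds. Let Φ : X → ℝ be Borel measurable and bounded on bounded subsets of X, suppose Z := ∫_X exp(−Φ(x)) dμ₀(x) ∈ (0, ∞), and define the Borel probability measure μ by μ(A) = Z⁻¹ ∫_A exp(−Φ(x)) dμ₀(x). Then property M(μ, E) holds, i.e. there exists x⋆ ∈ E such that for every x ∈ X ∖ E, lim_{r→0} μ(B(x,r))/μ(B(x⋆,r)) = 0. -/

import Mathlib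

open MeasureTheory Metric Filter Set Topology ENNReal

noncomputable section

/-- The topological support of a Borel measure on a metric space: the set of points all of
whose open balls have positive measure. -/
def measureSupport {X : Type*} [PseudoMetricSpace X] [MeasurableSpace X]
    (μ : Measure X) : Set X :=
  {x | ∀ r > 0, 0 < μ (Metric.ball x r)}

/-- `I` is an Onsager--Machlup functional for `μ` on `E`: for all `x₁ x₂ ∈ E`, the ratio of
small-ball probabilities tends to `exp (I x₂ - I x₁)` as the radius tends to `0⁺`. -/
def IsOMFunctional {X : Type*} [PseudoMetricSpace X] [MeasurableSpace X]
    (μ : Measure X) (E : Set X) (I : X → ℝ) : Prop :=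
  ∀ x₁ ∈ E, ∀ x₂ ∈ E,
    Filter.Tendsto (fun r : ℝ => μ (Metric.ball x₁ r) / μ (Metric.ball x₂ r))
      (𝓝[>] 0) (𝓝 (ENNReal.ofReal (Real.exp (I x₂ - I x₁))))

/-- Property `M(μ, E)`: there is `x⋆ ∈ E` such that for every `x ∉ E` the small-ball
probability ratio `μ(B(x,r)) / μ(B(x⋆,r))` tends to `0` as `r → 0⁺`. -/
def PropertyM {X : Type*} [PseudoMetricSpace X] [MeasurableSpace X]
    (μ : Measure X) (E : Set X) : Prop :=
  ∃ xs ∈ E, ∀ x ∉ E,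
    Filter.Tendsto (fun r : ℝ => μ (Metric.ball x r) / μ (Metric.ball xs r)) (𝓝[>] 0) (𝓝 0)
theorem M_property_transfers_to_reweighted_measure
    {X : Type*} [MetricSpace X] [MeasurableSpace X] [BorelSpace X]
    (μ₀ : Measure X) [IsProbabilityMeasure μ₀]
    (E : Set X) (hE : E.Nonempty) (hEsupp : E ⊆ measureSupport μ₀)
    (I : X → ℝ) (hI : IsOMFunctional μ₀ E I)
    (hM : PropertyM μ₀ E)
    (Φ : X → ℝ) (hΦmeas : Measurable Φ)
    (hΦbdd : ∀ s : Set X, Bornology.IsBounded s → ∃ C : ℝ, ∀ x ∈ s, |Φ x| ≤ C)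
    (Z : ℝ≥0∞) (hZ : Z = ∫⁻ x, ENNReal.ofReal (Real.exp (-Φ x)) ∂μ₀)
    (hZ0 : 0 < Z) (hZtop : Z < ⊤)
    (μ : Measure X)
    (hμ : μ = Z⁻¹ • μ₀.withDensity (fun x => ENNReal.ofReal (Real.exp (-Φ x))))
    [IsProbabilityMeasure μ] :
    PropertyM μ E := by
  obtain ⟨xs, hxs, hM'⟩ := hM
  refine ⟨xs, hxs, fun x hx => ?_⟩
  obtain ⟨Cx, hCx⟩ := hΦbdd (Metric.ball x 1) isBounded_ball
  obtain ⟨Cs, hCs⟩ := hΦbdd (Metric.ball xs 1) isBounded_ball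
  set f : X → ℝ≥0∞ := fun y => ENNReal.ofReal (Real.exp (-Φ y)) with hf
  set K : ℝ≥0∞ := ENNReal.ofReal (Real.exp Cx * Real.exp Cs) with hK
  have hKne : K ≠ ⊤ := ENNReal.ofReal_ne_top
  have key : ∀ᶠ r in 𝓝[>] (0:ℝ),
      μ (Metric.ball x r) / μ (Metric.ball xs r)
        ≤ K * (μ₀ (Metric.ball x r) / μ₀ (Metric.ball xs r)) := by
    filter_upwards [Ioo_mem_nhdsGT_of_mem (by norm_num : (0:ℝ) ∈ Ico 0 1)] with r hr
    obtain ⟨hr0, hr1⟩ := hr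
    have hcomp : ∀ s : Set X, MeasurableSet s →
        μ s = Z⁻¹ * ∫⁻ y in s, f y ∂μ₀ := by
      intro s hs
      rw [hμ, Measure.smul_apply, withDensity_apply _ hs, smul_eq_mul]
    have hZinv0 : Z⁻¹ ≠ 0 := by simp [hZtop.ne]
    have hZinvtop : Z⁻¹ ≠ ⊤ := by simp [hZ0.ne']
    rw [hcomp _ measurableSet_ball, hcomp _ measurableSet_ball,
      ENNReal.mul_div_mul_left _ _ hZinv0 hZinvtop]
    have hA : (∫⁻ y in Metric.ball x r, f y ∂μ₀)
        ≤ ENNReal.ofReal (Real.exp Cx) * μ₀ (Metric.ball x r) := by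
      calc ∫⁻ y in Metric.ball x r, f y ∂μ₀
          ≤ ∫⁻ _ in Metric.ball x r, ENNReal.ofReal (Real.exp Cx) ∂μ₀ := by
            refine setLIntegral_mono' measurableSet_ball fun y hy => ?_
            refine ENNReal.ofReal_le_ofReal (Real.exp_le_exp.2 ?_)
            have := hCx y (Metric.ball_subset_ball hr1.le hy)
            linarith [abs_le.1 this]
        _ = ENNReal.ofReal (Real.exp Cx) * μ₀ (Metric.ball x r) := by
            simp [mul_comm]
    have hB : ENNReal.ofReal (Real.exp (-Cs)) * μ₀ (Metric.ball xs r)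
        ≤ ∫⁻ y in Metric.ball xs r, f y ∂μ₀ := by
      calc ENNReal.ofReal (Real.exp (-Cs)) * μ₀ (Metric.ball xs r)
          = ∫⁻ _ in Metric.ball xs r, ENNReal.ofReal (Real.exp (-Cs)) ∂μ₀ := by
            simp [mul_comm]
        _ ≤ ∫⁻ y in Metric.ball xs r, f y ∂μ₀ := by
            refine setLIntegral_mono' measurableSet_ball fun y hy => ?_
            refine ENNReal.ofReal_le_ofReal (Real.exp_le_exp.2 ?_)
            have := hCs y (Metric.ball_subset_ball hr1.le hy)
            linarith [abs_le.1 this]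
    calc (∫⁻ y in Metric.ball x r, f y ∂μ₀) / (∫⁻ y in Metric.ball xs r, f y ∂μ₀)
        ≤ (ENNReal.ofReal (Real.exp Cx) * μ₀ (Metric.ball x r)) /
            (ENNReal.ofReal (Real.exp (-Cs)) * μ₀ (Metric.ball xs r)) :=
          ENNReal.div_le_div hA hB
      _ = K * (μ₀ (Metric.ball x r) / μ₀ (Metric.ball xs r)) := by
          have hc0 : ENNReal.ofReal (Real.exp (-Cs)) ≠ 0 :=
            (ENNReal.ofReal_pos.2 (Real.exp_pos _)).ne'
          have h1 : (ENNReal.ofReal (Real.exp (-Cs)))⁻¹ = ENNReal.ofReal (Real.exp Cs) := by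
            rw [← ENNReal.ofReal_inv_of_pos (Real.exp_pos _), Real.exp_neg, inv_inv]
          rw [div_eq_mul_inv, ENNReal.mul_inv (Or.inl hc0) (Or.inl ENNReal.ofReal_ne_top),
            h1, mul_mul_mul_comm, ← ENNReal.ofReal_mul (Real.exp_pos _).le,
            ← div_eq_mul_inv]
  have hU : Tendsto (fun r : ℝ =>
      K * (μ₀ (Metric.ball x r) / μ₀ (Metric.ball xs r))) (𝓝[>] 0) (𝓝 0) := by
    have := ENNReal.Tendsto.const_mul (hM' x hx) (Or.inr hKne)
    simpa using this
  exact tendsto_of_tendsto_of_tendsto_of_le_of_le' tendsto_const_nhds hU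
    (Eventually.of_forall fun r => zero_le) key
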